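/- Let p ≥ 3 be a prime and let (a_n)_{n≥0} be given by a_n = c_1·λ_1^n + c_2·λ_2^n with a_n ∈ ℚ_p for all n, where c_1, c_2, λ_1, λ_2 are nonzero elements of ℚ_p or of the unramified quadratic extension ℚ_p(√d). Assume |λ_1|_p = |λ_2|_p > 0 and that λ_2/λ_1 is not a root of unity. Let l be the order of λ_2/λ_1 modulo p. If −c_1/c_2 belongs to the closure of {(λ_2/λ_1)^n : n ∈ ℕ} and l = 1, then the Kepler set of (a_n) is K((a_n)) = ℚ_p \ ( (λ_1+λ_2)/2 + p^{1+ν_p(λ_2)}·ℤ_p ). -/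

import Mathlib

section aux
variable {p : ℕ} [Fact p.Prime] {K : Type} [NormedField K]

lemma kp_na_add_eq (hna : ∀ x y : K, ‖x + y‖ ≤ max ‖x‖ ‖y‖) {x y : K} (h : ‖y‖ < ‖x‖) :
    ‖x + y‖ = ‖x‖ := by
  refine le_antisymm ((hna x y).trans_eq (max_eq_left h.le)) ?_
  have h2 : ‖x‖ ≤ max ‖x + y‖ ‖y‖ := by
    have := hna (x + y) (-y)
    simpa using this
  rcases le_max_iff.mp h2 with h3 | h3
  · exact h3
  · exact absurd h3 (not_le.mpr h)

lemma kp_na_sum (hna : ∀ x y : K, ‖x + y‖ ≤ max ‖x‖ ‖y‖) {C : ℝ} (hC : 0 ≤ C)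
    (s : Finset ℕ) (f : ℕ → K) (hf : ∀ i ∈ s, ‖f i‖ ≤ C) : ‖∑ i ∈ s, f i‖ ≤ C := by
  classical
  induction s using Finset.cons_induction with
  | empty => simpa using hC
  | cons a s ha ih =>
    rw [Finset.sum_cons]
    refine (hna _ _).trans (max_le (hf a (Finset.mem_cons_self a s)) ?_)
    exact ih fun i hi => hf i (Finset.mem_cons_of_mem hi)

variable [Algebra ℚ_[p] K]

lemma kp_norm_natCast (hiso : ∀ x : ℚ_[p], ‖algebraMap ℚ_[p] K x‖ = ‖x‖) (m : ℕ) :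
    ‖(m : K)‖ = ‖(m : ℚ_[p])‖ := by
  rw [← map_natCast (algebraMap ℚ_[p] K) m, hiso]

lemma kp_norm_one_of_not_dvd (hiso : ∀ x : ℚ_[p], ‖algebraMap ℚ_[p] K x‖ = ‖x‖)
    {m : ℕ} (hm : ¬ p ∣ m) : ‖(m : K)‖ = 1 := by
  rw [kp_norm_natCast hiso]
  have h1 : ‖((m : ℤ) : ℚ_[p])‖ ≤ 1 := Padic.norm_int_le_one _
  have h2 : ¬ ‖((m : ℤ) : ℚ_[p])‖ < 1 := by
    rw [Padic.norm_intCast_lt_one_iff]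
    exact_mod_cast hm
  push_cast at h1 h2 ⊢
  linarith [lt_or_eq_of_le h1]

lemma kp_norm_u (hna : ∀ x y : K, ‖x + y‖ ≤ max ‖x‖ ‖y‖) {u : K} (hu : ‖u - 1‖ < 1) :
    ‖u‖ = 1 := by
  have h := kp_na_add_eq hna (x := (1 : K)) (y := u - 1) (by simpa using hu)
  simpa using h

lemma kp_per (u : K) (k : ℕ) :
    (∑ i ∈ Finset.range k, u ^ i) = (k : K) + ∑ i ∈ Finset.range k, (u ^ i - 1) := by
  rw [Finset.sum_sub_distrib, Finset.sum_const, Finset.card_range, nsmul_eq_mul, mul_one]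
  ring

lemma kp_geom_le (hna : ∀ x y : K, ‖x + y‖ ≤ max ‖x‖ ‖y‖) {u : K} (hu : ‖u - 1‖ < 1)
    (i : ℕ) : ‖u ^ i - 1‖ ≤ ‖u - 1‖ := by
  have hgs : (∑ k ∈ Finset.range i, u ^ k) * (u - 1) = u ^ i - 1 := geom_sum_mul u i
  rw [← hgs, norm_mul]
  have h1 : ‖∑ k ∈ Finset.range i, u ^ k‖ ≤ 1 := by
    refine kp_na_sum hna zero_le_one _ _ fun k _ => ?_
    rw [norm_pow, kp_norm_u hna hu, one_pow]
  calc ‖∑ k ∈ Finset.range i, u ^ k‖ * ‖u - 1‖ ≤ 1 * ‖u - 1‖ :=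
        mul_le_mul_of_nonneg_right h1 (norm_nonneg _)
    _ = ‖u - 1‖ := one_mul _

lemma kp_pow_not_dvd (hiso : ∀ x : ℚ_[p], ‖algebraMap ℚ_[p] K x‖ = ‖x‖)
    (hna : ∀ x y : K, ‖x + y‖ ≤ max ‖x‖ ‖y‖) {u : K} (hu : ‖u - 1‖ < 1)
    {m : ℕ} (hm : ¬ p ∣ m) : ‖u ^ m - 1‖ = ‖u - 1‖ := by
  have hgs : (∑ k ∈ Finset.range m, u ^ k) * (u - 1) = u ^ m - 1 := geom_sum_mul u m
  rw [← hgs, norm_mul]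
  have h1 : ‖∑ k ∈ Finset.range m, u ^ k‖ = 1 := by
    rw [kp_per u m, kp_na_add_eq hna, kp_norm_one_of_not_dvd hiso hm]
    rw [kp_norm_one_of_not_dvd hiso hm]
    exact lt_of_le_of_lt (kp_na_sum hna (norm_nonneg _) _ _ fun k _ => kp_geom_le hna hu k) hu
  rw [h1, one_mul]

lemma kp_pow_p (hp : 3 ≤ p) (hiso : ∀ x : ℚ_[p], ‖algebraMap ℚ_[p] K x‖ = ‖x‖)
    (hna : ∀ x y : K, ‖x + y‖ ≤ max ‖x‖ ‖y‖) {u : K} (hu : ‖u - 1‖ ≤ (p : ℝ)⁻¹) :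
    ‖u ^ p - 1‖ = (p : ℝ)⁻¹ * ‖u - 1‖ := by
  have hp1 : (1:ℝ) < (p:ℝ) := by exact_mod_cast lt_of_lt_of_le (by norm_num) hp
  have hp0 : (0:ℝ) < (p:ℝ) := lt_trans one_pos hp1
  have hpinv : (0:ℝ) < (p : ℝ)⁻¹ := by positivity
  have hpinv1 : (p:ℝ)⁻¹ < 1 := by
    rw [inv_lt_one_iff₀]; right; exact hp1
  have hu1 : ‖u - 1‖ < 1 := lt_of_le_of_lt hu hpinv1
  have hgs : (∑ k ∈ Finset.range p, u ^ k) * (u - 1) = u ^ p - 1 := geom_sum_mul u p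
  rw [← hgs, norm_mul]
  have hpK : ‖((p : ℕ) : K)‖ = (p : ℝ)⁻¹ := by
    rw [kp_norm_natCast hiso, Padic.norm_p]
  -- bound the tail sum
  have key : ‖∑ k ∈ Finset.range p, (u ^ k - 1)‖ ≤ (p : ℝ)⁻¹ * ‖u - 1‖ := by
    have hfac : ∑ k ∈ Finset.range p, (u ^ k - 1)
        = (∑ k ∈ Finset.range p, ∑ i ∈ Finset.range k, u ^ i) * (u - 1) := by
      rw [Finset.sum_mul]
      exact Finset.sum_congr rfl fun k _ => (geom_sum_mul u k).symm
    rw [hfac, norm_mul]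
    refine mul_le_mul_of_nonneg_right ?_ (norm_nonneg _)
    have hT : (∑ k ∈ Finset.range p, ∑ i ∈ Finset.range k, u ^ i)
        = ((∑ k ∈ Finset.range p, k : ℕ) : K)
          + ∑ k ∈ Finset.range p, ∑ i ∈ Finset.range k, (u ^ i - 1) := by
      push_cast
      rw [← Finset.sum_add_distrib]
      exact Finset.sum_congr rfl fun k _ => kp_per u k
    rw [hT]
    have hNdvd : ∃ c : ℕ, (∑ k ∈ Finset.range p, k) = p * c := by
      have hodd : p % 2 = 1 := Nat.odd_iff.mp ((Fact.out : p.Prime).odd_of_ne_two (by omega))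
      obtain ⟨c, hc⟩ : 2 ∣ (p - 1) := by omega
      refine ⟨c, ?_⟩
      have h2 := Finset.sum_range_id_mul_two p
      have : (∑ k ∈ Finset.range p, k) * 2 = p * c * 2 := by
        rw [h2, hc]; ring
      omega
    obtain ⟨c, hc⟩ := hNdvd
    have hN : ‖((∑ k ∈ Finset.range p, k : ℕ) : K)‖ ≤ (p : ℝ)⁻¹ := by
      rw [hc]
      push_cast
      rw [norm_mul]
      calc ‖((p:ℕ) : K)‖ * ‖((c:ℕ) : K)‖ ≤ (p:ℝ)⁻¹ * 1 := by
            rw [hpK]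
            refine mul_le_mul_of_nonneg_left ?_ hpinv.le
            rw [kp_norm_natCast hiso]
            exact_mod_cast Padic.norm_int_le_one (c : ℤ)
        _ = (p:ℝ)⁻¹ := mul_one _
    refine (hna _ _).trans (max_le hN ?_)
    refine kp_na_sum hna hpinv.le _ _ fun k _ => ?_
    exact le_trans (kp_na_sum hna (norm_nonneg _) _ _ fun i _ => kp_geom_le hna hu1 i) hu
  have hstrict : ‖∑ k ∈ Finset.range p, (u ^ k - 1)‖ < ‖((p : ℕ) : K)‖ := by
    rw [hpK]
    calc ‖∑ k ∈ Finset.range p, (u ^ k - 1)‖ ≤ (p : ℝ)⁻¹ * ‖u - 1‖ := key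
      _ < (p : ℝ)⁻¹ * 1 := by exact mul_lt_mul_of_pos_left hu1 hpinv
      _ = (p : ℝ)⁻¹ := mul_one _
  have hsum : ‖∑ k ∈ Finset.range p, u ^ k‖ = (p : ℝ)⁻¹ := by
    rw [kp_per u p, kp_na_add_eq hna hstrict, hpK]
  rw [hsum]

lemma kp_pow_sub_one (hp : 3 ≤ p) (hiso : ∀ x : ℚ_[p], ‖algebraMap ℚ_[p] K x‖ = ‖x‖)
    (hna : ∀ x y : K, ‖x + y‖ ≤ max ‖x‖ ‖y‖) {u : K} (hu : ‖u - 1‖ ≤ (p : ℝ)⁻¹)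
    (m : ℕ) : ‖u ^ m - 1‖ = ‖u - 1‖ * ‖((m : ℕ) : ℚ_[p])‖ := by
  have hp1 : (1:ℝ) < (p:ℝ) := by exact_mod_cast lt_of_lt_of_le (by norm_num) hp
  have hpinv1 : (p:ℝ)⁻¹ < 1 := by rw [inv_lt_one_iff₀]; right; exact hp1
  induction m using Nat.strong_induction_on with
  | _ m ih =>
    rcases Nat.eq_zero_or_pos m with rfl | hm0
    · simp
    by_cases hdvd : p ∣ m
    · obtain ⟨m', rfl⟩ := hdvd
      have hm'0 : 0 < m' := by
        rcases Nat.eq_zero_or_pos m' with rfl | h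
        · simp at hm0
        · exact h
      have hm'lt : m' < p * m' := by
        have hp2 : 2 ≤ p := (Fact.out : p.Prime).two_le
        calc m' = 1 * m' := (one_mul m').symm
          _ < p * m' := by
            exact (Nat.mul_lt_mul_right hm'0).mpr (by omega)
      have ihm' := ih m' hm'lt
      have hum' : ‖u ^ m' - 1‖ ≤ (p : ℝ)⁻¹ := by
        rw [ihm']
        calc ‖u - 1‖ * ‖((m' : ℕ) : ℚ_[p])‖ ≤ (p:ℝ)⁻¹ * 1 := by
              refine mul_le_mul hu ?_ (norm_nonneg _) (by positivity)
              exact_mod_cast Padic.norm_int_le_one (m' : ℤ)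
          _ = (p:ℝ)⁻¹ := mul_one _
      have hpow : u ^ (p * m') = (u ^ m') ^ p := by
        rw [← pow_mul, mul_comm]
      rw [hpow, kp_pow_p hp hiso hna hum', ihm']
      have hcast : ‖((p * m' : ℕ) : ℚ_[p])‖ = (p:ℝ)⁻¹ * ‖((m' : ℕ) : ℚ_[p])‖ := by
        push_cast
        rw [norm_mul, Padic.norm_p]
      rw [hcast]
      ring
    · rw [kp_pow_not_dvd hiso hna (lt_of_le_of_lt hu hpinv1) hdvd]
      rw [kp_norm_one_of_not_dvd (p := p) (K := ℚ_[p]) (fun x => by simp) hdvd]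
      ring

lemma kp_pow_sub_pow (hp : 3 ≤ p) (hiso : ∀ x : ℚ_[p], ‖algebraMap ℚ_[p] K x‖ = ‖x‖)
    (hna : ∀ x y : K, ‖x + y‖ ≤ max ‖x‖ ‖y‖) {u : K} (hu : ‖u - 1‖ ≤ (p : ℝ)⁻¹)
    (n m : ℕ) : ‖u ^ n - u ^ m‖ = ‖u - 1‖ * ‖((n : ℕ) : ℚ_[p]) - ((m : ℕ) : ℚ_[p])‖ := by
  have hp1 : (1:ℝ) < (p:ℝ) := by exact_mod_cast lt_of_lt_of_le (by norm_num) hp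
  have hpinv1 : (p:ℝ)⁻¹ < 1 := by rw [inv_lt_one_iff₀]; right; exact hp1
  have hu1 : ‖u - 1‖ < 1 := lt_of_le_of_lt hu hpinv1
  have main : ∀ n m : ℕ, m ≤ n →
      ‖u ^ n - u ^ m‖ = ‖u - 1‖ * ‖((n : ℕ) : ℚ_[p]) - ((m : ℕ) : ℚ_[p])‖ := by
    intro n m hmn
    have h1 : u ^ n - u ^ m = u ^ m * (u ^ (n - m) - 1) := by
      rw [mul_sub, mul_one, ← pow_add]
      congr 2
      omega
    rw [h1, norm_mul, norm_pow, kp_norm_u hna hu1, one_pow, one_mul,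
      kp_pow_sub_one hp hiso hna hu]
    congr 1
    have : ((n - m : ℕ) : ℚ_[p]) = (n : ℚ_[p]) - (m : ℚ_[p]) := by
      push_cast [Nat.cast_sub hmn]
      ring
    rw [this]
  rcases le_total m n with h | h
  · exact main n m h
  · rw [norm_sub_rev, main m n h, norm_sub_rev ((m : ℚ_[p]))]

end aux

/-- The Kepler set of a sequence `a` in `ℚ_[p]`: the closure of the set of
consecutive ratios `a (n+1) / a n` over indices `n` with `a n ≠ 0`. -/
def keplerSet (p : ℕ) [Fact p.Prime] (a : ℕ → ℚ_[p]) : Set ℚ_[p] :=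
  closure {x : ℚ_[p] | ∃ n : ℕ, a n ≠ 0 ∧ x = a (n + 1) / a n}

set_option maxHeartbeats 2000000 in
theorem stmt_2 (p : ℕ) [Fact p.Prime] (hp : 3 ≤ p)
    -- `K` is `ℚ_p` or the unramified quadratic extension `ℚ_p(√d)` of `ℚ_p`
    (K : Type) [NormedField K] [Algebra ℚ_[p] K]
    (hiso : ∀ x : ℚ_[p], ‖algebraMap ℚ_[p] K x‖ = ‖x‖)
    (hna : ∀ x y : K, ‖x + y‖ ≤ max ‖x‖ ‖y‖)
    (hval : ∀ x : K, x ≠ 0 → ∃ m : ℤ, ‖x‖ = (p : ℝ) ^ (-m))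
    (d : ℚ_[p]) (hd : ‖d‖ = 1) (hdns : ¬ ∃ y : ℚ_[p], y ^ 2 = d)
    (sq : K) (hsq : sq ^ 2 = algebraMap ℚ_[p] K d)
    (hspan : ∀ x : K, ∃ u v : ℚ_[p], x = algebraMap ℚ_[p] K u + algebraMap ℚ_[p] K v * sq)
    -- the sequence `a n = c₁ λ₁ ^ n + c₂ λ₂ ^ n`, with values in `ℚ_p`
    (c₁ c₂ lam₁ lam₂ : K) (hc₁ : c₁ ≠ 0) (hc₂ : c₂ ≠ 0) (hlam₁ : lam₁ ≠ 0) (hlam₂ : lam₂ ≠ 0)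
    (hnorm : ‖lam₁‖ = ‖lam₂‖) (hpos : 0 < ‖lam₂‖)
    (hru : ∀ n : ℕ, 0 < n → (lam₂ / lam₁) ^ n ≠ 1)
    (a : ℕ → ℚ_[p])
    (ha : ∀ n : ℕ, algebraMap ℚ_[p] K (a n) = c₁ * lam₁ ^ n + c₂ * lam₂ ^ n)
    -- `l` is the order of `λ₂/λ₁` modulo `p`, and `l = 1`
    (l : ℕ) (hl0 : 0 < l) (hl : ‖(lam₂ / lam₁) ^ l - 1‖ ≤ (p : ℝ)⁻¹)
    (hlmin : ∀ m : ℕ, 0 < m → ‖(lam₂ / lam₁) ^ m - 1‖ ≤ (p : ℝ)⁻¹ → l ≤ m)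
    (hl1 : l = 1)
    -- `-c₁/c₂` belongs to the closure of `{(λ₂/λ₁) ^ n}`
    (hcl : -(c₁ / c₂) ∈ closure {z : K | ∃ n : ℕ, z = (lam₂ / lam₁) ^ n})
    -- `v₂ = ν_p(lam₂)` and `t = (λ₁ + λ₂)/2 ∈ ℚ_p`
    (v₂ : ℤ) (hv₂ : ‖lam₂‖ = (p : ℝ) ^ (-v₂))
    (t : ℚ_[p]) (ht : algebraMap ℚ_[p] K t = (lam₁ + lam₂) / 2) :
    keplerSet p a = {x : ℚ_[p] | ‖x - t‖ ≤ (p : ℝ) ^ (-(1 + v₂))}ᶜ := by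
  have hp1 : (1:ℝ) < (p:ℝ) := by exact_mod_cast lt_of_lt_of_le (by norm_num) hp
  have hp0 : (0:ℝ) < (p:ℝ) := lt_trans one_pos hp1
  have hpinv1 : (p:ℝ)⁻¹ < 1 := by rw [inv_lt_one_iff₀]; right; exact hp1
  set q : K := lam₂ / lam₁ with hqdef
  set b : K := c₂ / c₁ with hbdef
  have hq0 : q ≠ 0 := div_ne_zero hlam₂ hlam₁
  have hb0 : b ≠ 0 := div_ne_zero hc₂ hc₁
  have hq1 : ‖q - 1‖ ≤ (p:ℝ)⁻¹ := by
    have := hl; rw [hl1, pow_one] at this; exact this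
  have hqne1 : q ≠ 1 := by
    have := hru 1 one_pos; rwa [pow_one] at this
  have hq1pos : 0 < ‖q - 1‖ := norm_pos_iff.mpr (sub_ne_zero.mpr hqne1)
  have hq1lt : ‖q - 1‖ < 1 := lt_of_le_of_lt hq1 hpinv1
  have hqn : ‖q‖ = 1 := kp_norm_u hna hq1lt
  -- extract an approximating sequence for -(c₁/c₂)
  obtain ⟨f, hfS, hftend⟩ := mem_closure_iff_seq_limit.mp hcl
  choose nk hnk using hfS
  -- the sequence (nk k : ℚ_p) is Cauchy, with limit z
  have hgC : CauchySeq (fun k => ((nk k : ℕ) : ℚ_[p])) := by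
    rw [Metric.cauchySeq_iff]
    have hfC := hftend.cauchySeq
    rw [Metric.cauchySeq_iff] at hfC
    intro ε hε
    obtain ⟨N, hN⟩ := hfC (ε * ‖q - 1‖) (by positivity)
    refine ⟨N, fun k hk k' hk' => ?_⟩
    have h1 := hN k hk k' hk'
    rw [dist_eq_norm, hnk k, hnk k', kp_pow_sub_pow hp hiso hna hq1] at h1
    rw [dist_eq_norm]
    nlinarith [norm_nonneg (((nk k : ℕ) : ℚ_[p]) - ((nk k' : ℕ) : ℚ_[p]))]
  obtain ⟨z, hz⟩ := cauchySeq_tendsto_of_complete hgC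
  have hz1 : ‖z‖ ≤ 1 := by
    refine le_of_tendsto hz.norm (Filter.Eventually.of_forall fun k => ?_)
    exact_mod_cast Padic.norm_int_le_one ((nk k : ℕ) : ℤ)
  -- norm of q^n + c₁/c₂
  have hkey : ∀ n : ℕ, ‖q ^ n + c₁/c₂‖ = ‖q - 1‖ * ‖((n : ℕ) : ℚ_[p]) - z‖ := by
    intro n
    have t1 : Filter.Tendsto (fun k => ‖q ^ n - f k‖) Filter.atTop
        (nhds ‖q ^ n - (-(c₁/c₂))‖) := ((tendsto_const_nhds.sub hftend).norm)
    have heq : (fun k => ‖q ^ n - f k‖)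
        = fun k => ‖q - 1‖ * ‖((n : ℕ) : ℚ_[p]) - ((nk k : ℕ) : ℚ_[p])‖ := by
      funext k
      rw [hnk k, kp_pow_sub_pow hp hiso hna hq1]
    have t2 : Filter.Tendsto (fun k => ‖q - 1‖ * ‖((n : ℕ) : ℚ_[p]) - ((nk k : ℕ) : ℚ_[p])‖)
        Filter.atTop (nhds (‖q - 1‖ * ‖((n : ℕ) : ℚ_[p]) - z‖)) :=
      tendsto_const_nhds.mul ((tendsto_const_nhds.sub hz).norm)
    have := tendsto_nhds_unique (heq ▸ t1) t2
    rwa [sub_neg_eq_add] at this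
  -- basic norms
  have hbinv1 : ‖-(c₁/c₂) - 1‖ ≤ (p:ℝ)⁻¹ := by
    refine le_of_tendsto ((hftend.sub tendsto_const_nhds).norm)
      (Filter.Eventually.of_forall fun k => ?_)
    rw [hnk k, kp_pow_sub_one hp hiso hna hq1]
    calc ‖q - 1‖ * ‖((nk k : ℕ) : ℚ_[p])‖ ≤ (p:ℝ)⁻¹ * 1 := by
          refine mul_le_mul hq1 ?_ (norm_nonneg _) (by positivity)
          exact_mod_cast Padic.norm_int_le_one ((nk k : ℕ) : ℤ)
      _ = (p:ℝ)⁻¹ := mul_one _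
  have hc12 : ‖c₁/c₂‖ = 1 := by
    have h1 : ‖(1:K) + (-(c₁/c₂) - 1)‖ = ‖(1:K)‖ :=
      kp_na_add_eq hna (by rw [norm_one]; exact lt_of_le_of_lt hbinv1 hpinv1)
    have h2 : (1:K) + (-(c₁/c₂) - 1) = -(c₁/c₂) := by ring
    rw [h2, norm_neg, norm_one] at h1
    exact h1
  have hbn : ‖b‖ = 1 := by
    have : b = (c₁/c₂)⁻¹ := by
      rw [hbdef]; field_simp
    rw [this, norm_inv, hc12, inv_one]
  have hDn : ∀ n : ℕ, ‖1 + b * q ^ n‖ = ‖q - 1‖ * ‖((n : ℕ) : ℚ_[p]) - z‖ := by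
    intro n
    have h1 : (1 : K) + b * q ^ n = b * (q ^ n + c₁/c₂) := by
      rw [hbdef]; field_simp; ring
    rw [h1, norm_mul, hbn, one_mul, hkey n]
  have hz_le : ∀ n : ℕ, ‖((n : ℕ) : ℚ_[p]) - z‖ ≤ 1 := by
    intro n
    rw [sub_eq_add_neg]
    refine (Padic.nonarchimedean _ _).trans (max_le ?_ ?_)
    · exact_mod_cast Padic.norm_int_le_one ((n : ℕ) : ℤ)
    · rw [norm_neg]; exact hz1
  have hinj : Function.Injective (algebraMap ℚ_[p] K) := (algebraMap ℚ_[p] K).injective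
  have hA : ∀ n : ℕ, algebraMap ℚ_[p] K (a n) = c₁ * lam₁ ^ n * (1 + b * q ^ n) := by
    intro n
    rw [ha n, hbdef, hqdef, div_pow]
    field_simp
  have ha_iff : ∀ n : ℕ, a n ≠ 0 ↔ ((n : ℕ) : ℚ_[p]) ≠ z := by
    intro n
    rw [not_iff_not.symm]
    push_neg
    constructor
    · intro h0
      by_contra hne
      have hd0 : (1 : K) + b * q ^ n ≠ 0 := by
        intro hc
        have := hDn n
        rw [hc, norm_zero] at this
        have h2 : ‖((n : ℕ) : ℚ_[p]) - z‖ = 0 := by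
          nlinarith [norm_nonneg (((n : ℕ) : ℚ_[p]) - z)]
        exact hne (sub_eq_zero.mp (norm_eq_zero.mp h2))
      have := hA n
      rw [h0, map_zero] at this
      exact (mul_ne_zero (mul_ne_zero hc₁ (pow_ne_zero n hlam₁)) hd0) this.symm
    · intro hnz
      have hd0 : (1 : K) + b * q ^ n = 0 := by
        have h2 : ‖(1 : K) + b * q ^ n‖ = 0 := by
          rw [hDn n, hnz, sub_self, norm_zero, mul_zero]
        exact norm_eq_zero.mp h2
      have := hA n
      rw [hd0, mul_zero] at this
      exact hinj (by rw [this, map_zero])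
  have hden : ∀ n : ℕ, ((n : ℕ) : ℚ_[p]) ≠ z → (1 : K) + b * q ^ n ≠ 0 := by
    intro n hn hc
    have h3 := hDn n
    rw [hc, norm_zero] at h3
    have h2 : ‖((n : ℕ) : ℚ_[p]) - z‖ = 0 := by
      nlinarith [norm_nonneg (((n : ℕ) : ℚ_[p]) - z)]
    exact hn (sub_eq_zero.mp (norm_eq_zero.mp h2))
  have h2K : ‖(2:K)‖ = 1 := by
    have hcast : ((2:ℕ):K) = (2:K) := by norm_cast
    rw [← hcast]
    refine kp_norm_one_of_not_dvd hiso fun hdvd => ?_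
    have := Nat.le_of_dvd (by norm_num) hdvd
    omega
  have h2ne : (2:K) ≠ 0 := by
    intro h; rw [h, norm_zero] at h2K; norm_num at h2K
  have hbq1 : ∀ n : ℕ, ‖b * q ^ n - 1‖ = 1 := by
    intro n
    have hlt : ‖(1:K) + b * q ^ n‖ < ‖(-2:K)‖ := by
      rw [norm_neg, h2K, hDn n]
      calc ‖q - 1‖ * ‖((n:ℕ):ℚ_[p]) - z‖ ≤ (p:ℝ)⁻¹ * 1 :=
            mul_le_mul hq1 (hz_le n) (norm_nonneg _) (by positivity)
        _ < 1 := by rw [mul_one]; exact hpinv1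
    have h1 : b * q ^ n - 1 = (-2 : K) + (1 + b * q ^ n) := by ring
    rw [h1, kp_na_add_eq hna hlt, norm_neg, h2K]
  have hlam₁n : ‖lam₁‖ = (p:ℝ) ^ (-v₂) := hnorm.trans hv₂
  have hql : lam₂ = q * lam₁ := by rw [hqdef]; field_simp
  have hratio : ∀ n : ℕ, ((n:ℕ):ℚ_[p]) ≠ z →
      algebraMap ℚ_[p] K (a (n+1) / a n - t)
        = lam₁ * (q - 1) * (b * q ^ n - 1) / (2 * (1 + b * q ^ n)) := by
    intro n hn
    have han : a n ≠ 0 := (ha_iff n).mpr hn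
    have hdn : (1:K) + b * q ^ n ≠ 0 := hden n hn
    have hpow : lam₁ ^ n ≠ 0 := pow_ne_zero _ hlam₁
    rw [map_sub, map_div₀, hA (n+1), hA n, ht, hql, pow_succ, pow_succ]
    field_simp
    ring
  have hrt : ∀ n : ℕ, ((n:ℕ):ℚ_[p]) ≠ z →
      ‖a (n+1) / a n - t‖ = (p:ℝ) ^ (-v₂) / ‖((n:ℕ):ℚ_[p]) - z‖ := by
    intro n hn
    have hw : ‖((n:ℕ):ℚ_[p]) - z‖ ≠ 0 := norm_ne_zero_iff.mpr (sub_ne_zero.mpr hn)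
    rw [← hiso (a (n+1)/a n - t), hratio n hn, norm_div, norm_mul, norm_mul, norm_mul,
      hbq1 n, hDn n, h2K, hlam₁n]
    have hq1ne : ‖q - 1‖ ≠ 0 := ne_of_gt hq1pos
    field_simp
  have hrrid : ∀ n m : ℕ, ((n:ℕ):ℚ_[p]) ≠ z → ((m:ℕ):ℚ_[p]) ≠ z →
      algebraMap ℚ_[p] K (a (n+1) / a n - a (m+1) / a m)
        = lam₁ * (q - 1) * b * (q ^ n - q ^ m) / ((1 + b * q ^ n) * (1 + b * q ^ m)) := by
    intro n m hn hm
    have han : a n ≠ 0 := (ha_iff n).mpr hn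
    have ham : a m ≠ 0 := (ha_iff m).mpr hm
    have hdn : (1:K) + b * q ^ n ≠ 0 := hden n hn
    have hdm : (1:K) + b * q ^ m ≠ 0 := hden m hm
    have hpn : lam₁ ^ n ≠ 0 := pow_ne_zero _ hlam₁
    have hpm : lam₁ ^ m ≠ 0 := pow_ne_zero _ hlam₁
    rw [map_sub, map_div₀, map_div₀, hA (n+1), hA n, hA (m+1), hA m,
      pow_succ, pow_succ, pow_succ, pow_succ]
    field_simp
    ring
  have hrr : ∀ n m : ℕ, ((n:ℕ):ℚ_[p]) ≠ z → ((m:ℕ):ℚ_[p]) ≠ z →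
      ‖a (n+1) / a n - a (m+1) / a m‖
        = (p:ℝ) ^ (-v₂) * ‖((n:ℕ):ℚ_[p]) - ((m:ℕ):ℚ_[p])‖
            / (‖((n:ℕ):ℚ_[p]) - z‖ * ‖((m:ℕ):ℚ_[p]) - z‖) := by
    intro n m hn hm
    have hwn : ‖((n:ℕ):ℚ_[p]) - z‖ ≠ 0 := norm_ne_zero_iff.mpr (sub_ne_zero.mpr hn)
    have hwm : ‖((m:ℕ):ℚ_[p]) - z‖ ≠ 0 := norm_ne_zero_iff.mpr (sub_ne_zero.mpr hm)
    have hq1ne : ‖q - 1‖ ≠ 0 := ne_of_gt hq1pos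
    rw [← hiso (a (n+1)/a n - a (m+1)/a m), hrrid n m hn hm, norm_div, norm_mul, norm_mul,
      norm_mul, norm_mul, hbn, hDn n, hDn m, kp_pow_sub_pow hp hiso hna hq1, hlam₁n]
    field_simp
  -- the closed超set
  have hset : {x : ℚ_[p] | ‖x - t‖ ≤ (p : ℝ) ^ (-(1 + v₂))}
      = {x : ℚ_[p] | ‖x - t‖ < (p : ℝ) ^ (-v₂)} := by
    ext x
    simp only [Set.mem_setOf_eq]
    have h1 := Padic.norm_le_pow_iff_norm_lt_pow_add_one (x - t) (-(1 + v₂))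
    have h2 : -(1 + v₂) + 1 = -v₂ := by ring
    rw [h1, h2]
  have hclosed : IsClosed ({x : ℚ_[p] | ‖x - t‖ ≤ (p : ℝ) ^ (-(1 + v₂))}ᶜ) := by
    rw [hset]
    refine IsOpen.isClosed_compl ?_
    exact isOpen_lt (Continuous.norm (continuous_id.sub continuous_const)) continuous_const
  -- ⊆ direction
  have hsub : keplerSet p a ⊆ {x : ℚ_[p] | ‖x - t‖ ≤ (p : ℝ) ^ (-(1 + v₂))}ᶜ := by
    refine closure_minimal ?_ hclosed
    rintro x ⟨n, han, rfl⟩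
    have hn : ((n:ℕ):ℚ_[p]) ≠ z := (ha_iff n).mp han
    simp only [Set.mem_compl_iff, Set.mem_setOf_eq, not_le]
    rw [hrt n hn]
    have h1 : ‖((n:ℕ):ℚ_[p]) - z‖ ≤ 1 := hz_le n
    have h2 : 0 < ‖((n:ℕ):ℚ_[p]) - z‖ := norm_pos_iff.mpr (sub_ne_zero.mpr hn)
    have hzp : (0:ℝ) < (p:ℝ) ^ (-v₂) := zpow_pos hp0 _
    have h3 : (p:ℝ) ^ (-v₂) ≤ (p:ℝ) ^ (-v₂) / ‖((n:ℕ):ℚ_[p]) - z‖ := by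
      rw [le_div_iff₀ h2]
      nlinarith
    refine lt_of_lt_of_le ?_ h3
    exact zpow_lt_zpow_right₀ hp1 (by omega)
  have hisoQ : ∀ x : ℚ_[p], ‖algebraMap ℚ_[p] ℚ_[p] x‖ = ‖x‖ := fun x => by
    simp
  have hnaQ : ∀ x y : ℚ_[p], ‖x + y‖ ≤ max ‖x‖ ‖y‖ := Padic.nonarchimedean
  have hppos : p ≠ 0 := by omega
  -- ⊇ direction
  have hsup : {x : ℚ_[p] | ‖x - t‖ ≤ (p : ℝ) ^ (-(1 + v₂))}ᶜ ⊆ keplerSet p a := by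
    intro x hx
    simp only [Set.mem_compl_iff, Set.mem_setOf_eq, not_le] at hx
    have hge : (p:ℝ) ^ (-v₂) ≤ ‖x - t‖ := by
      by_contra hcon
      push_neg at hcon
      have h1 : ‖x - t‖ ≤ (p:ℝ) ^ (-(1 + v₂)) := by
        rw [Padic.norm_le_pow_iff_norm_lt_pow_add_one]
        rw [show -(1+v₂)+1 = -v₂ by ring]
        exact hcon
      exact absurd h1 (not_le.mpr hx)
    have hxt : x - t ≠ 0 := by
      intro h
      rw [h, norm_zero] at hge
      nlinarith [zpow_pos hp0 (-v₂)]
    set v : ℤ := (x - t).valuation with hvdef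
    have hxnorm : ‖x - t‖ = (p:ℝ) ^ (-v) := Padic.norm_eq_zpow_neg_valuation hxt
    have hvle : v ≤ v₂ := by
      rw [hxnorm] at hge
      have h1 := (zpow_le_zpow_iff_right₀ hp1).mp hge
      omega
    set j : ℕ := (v₂ - v).toNat with hjdef
    have hjv : (j:ℤ) = v₂ - v := Int.toNat_of_nonneg (by omega)
    show x ∈ closure {y : ℚ_[p] | ∃ n : ℕ, a n ≠ 0 ∧ y = a (n + 1) / a n}
    rw [Metric.mem_closure_iff]
    intro ε hε
    obtain ⟨k₀, hk₀⟩ := exists_pow_lt_of_lt_one (mul_pos hε (zpow_pos hp0 v)) hpinv1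
    set Kp : ℕ := k₀ + 1 with hKpdef
    have hKp1 : 1 ≤ Kp := by omega
    have hKpbound : (p:ℝ) ^ (-v) * (p:ℝ) ^ (-(Kp:ℤ)) < ε := by
      have h0 : (p:ℝ) ^ (-(Kp:ℤ)) = ((p:ℝ)⁻¹) ^ Kp := by
        rw [zpow_neg, zpow_natCast, ← inv_pow]
      have h1 : ((p:ℝ)⁻¹) ^ Kp ≤ ((p:ℝ)⁻¹) ^ k₀ :=
        pow_le_pow_of_le_one (by positivity) hpinv1.le (by omega)
      calc (p:ℝ)^(-v) * (p:ℝ)^(-(Kp:ℤ)) ≤ (p:ℝ)^(-v) * ((p:ℝ)⁻¹)^k₀ := by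
            rw [h0]
            exact mul_le_mul_of_nonneg_left h1 (zpow_pos hp0 _).le
        _ < (p:ℝ)^(-v) * (ε * (p:ℝ)^v) := mul_lt_mul_of_pos_left hk₀ (zpow_pos hp0 _)
        _ = ε := by
            rw [mul_comm ε, ← mul_assoc, ← zpow_add₀ (ne_of_gt hp0)]
            simp
    haveI hNZ : NeZero (p ^ Kp) := ⟨pow_ne_zero _ hppos⟩
    -- density of ℕ
    have hdense : ∀ w : ℚ_[p], ‖w‖ ≤ 1 →
        ∃ n : ℕ, ‖(n:ℚ_[p]) - w‖ < (p:ℝ) ^ (-((j + Kp + 1 : ℕ):ℤ)) := by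
      intro w hw
      have hδ : (0:ℝ) < (p:ℝ) ^ (-((j + Kp + 1 : ℕ):ℤ)) := zpow_pos hp0 _
      obtain ⟨n, hn⟩ := PadicInt.denseRange_natCast.exists_dist_lt (⟨w, hw⟩ : ℤ_[p]) hδ
      refine ⟨n, ?_⟩
      have heq : dist (⟨w, hw⟩ : ℤ_[p]) ((n : ℕ) : ℤ_[p]) = ‖(n:ℚ_[p]) - w‖ := by
        show dist w (n:ℚ_[p]) = _
        rw [dist_eq_norm, norm_sub_rev]
      exact lt_of_eq_of_lt heq.symm hn
    -- the candidate indices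
    set τ : (ZMod (p ^ Kp))ˣ → ℚ_[p] :=
      fun m => z + (p:ℚ_[p])^(j:ℕ) * (((m : ZMod (p ^ Kp)).val : ℕ) : ℚ_[p]) with hτdef
    have hτ1 : ∀ m, ‖τ m‖ ≤ 1 := by
      intro m
      refine (Padic.nonarchimedean _ _).trans (max_le hz1 ?_)
      rw [norm_mul]
      calc ‖(p:ℚ_[p])^(j:ℕ)‖ * ‖(((m : ZMod (p ^ Kp)).val : ℕ) : ℚ_[p])‖ ≤ 1 * 1 := by
            refine mul_le_mul ?_ ?_ (norm_nonneg _) zero_le_one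
            · rw [Padic.norm_p_pow]
              exact (zpow_le_zpow_right₀ hp1.le (by omega)).trans_eq (zpow_zero _)
            · exact_mod_cast Padic.norm_int_le_one (((m : ZMod (p ^ Kp)).val : ℕ) : ℤ)
        _ = 1 := mul_one _
    have hvals : ∀ m : (ZMod (p ^ Kp))ˣ, ¬ p ∣ (m : ZMod (p ^ Kp)).val := by
      intro m hdvd
      have hco := ZMod.val_coe_unit_coprime m
      have h1 : p ∣ Nat.gcd ((m : ZMod (p ^ Kp)).val) (p ^ Kp) :=
        Nat.dvd_gcd hdvd (dvd_pow_self p (by omega))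
      rw [Nat.Coprime] at hco
      rw [hco] at h1
      have := Nat.le_of_dvd one_pos h1
      omega
    choose nm hnm using fun m : (ZMod (p ^ Kp))ˣ => hdense (τ m) (hτ1 m)
    -- distance from z
    have hnz : ∀ m : (ZMod (p ^ Kp))ˣ, ‖((nm m : ℕ):ℚ_[p]) - z‖ = (p:ℝ) ^ (-(j:ℤ)) := by
      intro m
      have hsplit : ((nm m : ℕ):ℚ_[p]) - z
          = (p:ℚ_[p])^(j:ℕ) * (((m : ZMod (p ^ Kp)).val : ℕ) : ℚ_[p])
            + (((nm m : ℕ):ℚ_[p]) - τ m) := by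
        rw [hτdef]; ring
      have hmain : ‖(p:ℚ_[p])^(j:ℕ) * (((m : ZMod (p ^ Kp)).val : ℕ) : ℚ_[p])‖
          = (p:ℝ) ^ (-(j:ℤ)) := by
        rw [norm_mul, Padic.norm_p_pow,
          kp_norm_one_of_not_dvd (p := p) (K := ℚ_[p]) hisoQ (hvals m), mul_one]
      have hsmall : ‖((nm m : ℕ):ℚ_[p]) - τ m‖
          < ‖(p:ℚ_[p])^(j:ℕ) * (((m : ZMod (p ^ Kp)).val : ℕ) : ℚ_[p])‖ := by
        rw [hmain]
        refine lt_of_lt_of_le (hnm m) ?_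
        refine zpow_le_zpow_right₀ hp1.le ?_
        push_cast
        omega
      rw [hsplit, kp_na_add_eq (K := ℚ_[p]) hnaQ hsmall, hmain]
    have hnmne : ∀ m : (ZMod (p ^ Kp))ˣ, ((nm m : ℕ):ℚ_[p]) ≠ z := by
      intro m h
      have := hnz m
      rw [h, sub_self, norm_zero] at this
      exact absurd this.symm (ne_of_gt (zpow_pos hp0 _))
    have hanm : ∀ m : (ZMod (p ^ Kp))ˣ, a (nm m) ≠ 0 := fun m => (ha_iff _).mpr (hnmne m)
    have hzz : ∀ (a1 a2 : ℤ), (p:ℝ)^a1 * (p:ℝ)^a2 = (p:ℝ)^(a1+a2) :=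
      fun a1 a2 => (zpow_add₀ (ne_of_gt hp0) _ _).symm
    -- normalized values
    have hwnorm : ∀ m : (ZMod (p ^ Kp))ˣ,
        ‖(a (nm m + 1) / a (nm m) - t) * (p:ℚ_[p]) ^ (-v)‖ = 1 := by
      intro m
      rw [norm_mul, hrt (nm m) (hnmne m), hnz m, Padic.norm_p_zpow, neg_neg,
        div_eq_mul_inv, ← zpow_neg, hzz, hzz]
      rw [show -v₂ + -(-(j:ℤ)) + v = 0 by omega, zpow_zero]
    set W : (ZMod (p ^ Kp))ˣ → ℤ_[p] :=
      fun m => ⟨(a (nm m + 1) / a (nm m) - t) * (p:ℚ_[p]) ^ (-v), le_of_eq (hwnorm m)⟩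
      with hWdef
    have hWunit : ∀ m, IsUnit (W m) := fun m =>
      PadicInt.isUnit_iff.mpr (by rw [PadicInt.norm_def]; exact hwnorm m)
    set Φ : (ZMod (p ^ Kp))ˣ → (ZMod (p ^ Kp))ˣ :=
      fun m => ((hWunit m).map (PadicInt.toZModPow Kp)).unit with hΦdef
    have hdiff : ∀ (A B : ℤ_[p]), PadicInt.toZModPow Kp A = PadicInt.toZModPow Kp B →
        ‖(A : ℚ_[p]) - (B : ℚ_[p])‖ ≤ (p:ℝ)^(-(Kp:ℤ)) := by
      intro A B hAB
      have h1 : A - B ∈ RingHom.ker (PadicInt.toZModPow (p := p) Kp) := by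
        rw [RingHom.mem_ker, map_sub, sub_eq_zero]; exact hAB
      rw [PadicInt.ker_toZModPow] at h1
      have h2 := (PadicInt.norm_le_pow_iff_mem_span_pow (A - B) Kp).mpr h1
      rwa [PadicInt.norm_def, PadicInt.coe_sub] at h2
    -- separation of the nm values
    have hnn' : ∀ m m' : (ZMod (p ^ Kp))ˣ, m ≠ m' →
        (p:ℝ)^(-((j:ℤ) + Kp - 1)) ≤ ‖((nm m : ℕ):ℚ_[p]) - ((nm m' : ℕ):ℚ_[p])‖ := by
      intro m m' hne
      have hα := ZMod.val_lt (m : ZMod (p ^ Kp))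
      have hβ := ZMod.val_lt (m' : ZMod (p ^ Kp))
      have hvne : (m : ZMod (p ^ Kp)).val ≠ (m' : ZMod (p ^ Kp)).val := by
        intro h
        exact hne (Units.ext (ZMod.val_injective _ h))
      have hk0 : ((m : ZMod (p ^ Kp)).val : ℤ) - ((m' : ZMod (p ^ Kp)).val : ℤ) ≠ 0 := by
        intro h
        exact hvne (by omega)
      have hndvd : ¬ ((p:ℤ) ^ Kp ∣ (((m : ZMod (p ^ Kp)).val : ℤ) - ((m' : ZMod (p ^ Kp)).val : ℤ))) := by
        intro hdvd
        have h1 := Int.le_of_dvd (abs_pos.mpr hk0) ((dvd_abs _ _).mpr hdvd)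
        have h2 : |((m : ZMod (p ^ Kp)).val : ℤ) - ((m' : ZMod (p ^ Kp)).val : ℤ)| < (p:ℤ) ^ Kp := by
          have hc : ((p ^ Kp : ℕ) : ℤ) = (p:ℤ) ^ Kp := by push_cast; ring
          rw [abs_sub_lt_iff]
          omega
        omega
      have hnormk : (p:ℝ)^(-(Kp:ℤ)+1)
          ≤ ‖((((m : ZMod (p ^ Kp)).val : ℤ) - ((m' : ZMod (p ^ Kp)).val : ℤ) : ℤ) : ℚ_[p])‖ := by
        by_contra hcon
        push_neg at hcon
        have h1 : ‖((((m : ZMod (p ^ Kp)).val : ℤ) - ((m' : ZMod (p ^ Kp)).val : ℤ) : ℤ) : ℚ_[p])‖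
            ≤ (p:ℝ) ^ (-(Kp:ℤ)) := by
          rw [Padic.norm_le_pow_iff_norm_lt_pow_add_one]
          exact hcon
        have h2 := (Padic.norm_int_le_pow_iff_dvd _ Kp).mp h1
        push_cast at h2
        exact hndvd h2
      have hττ : τ m - τ m'
          = (p:ℚ_[p])^(j:ℕ) * (((((m : ZMod (p ^ Kp)).val : ℤ) - ((m' : ZMod (p ^ Kp)).val : ℤ) : ℤ)) : ℚ_[p]) := by
        rw [hτdef]
        push_cast
        ring
      have hττn : (p:ℝ)^(-((j:ℤ) + Kp - 1)) ≤ ‖τ m - τ m'‖ := by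
        rw [hττ, norm_mul, Padic.norm_p_pow]
        calc (p:ℝ)^(-((j:ℤ) + Kp - 1)) = (p:ℝ)^(-(j:ℤ)) * (p:ℝ)^(-(Kp:ℤ)+1) := by
              rw [hzz]; congr 1; ring
          _ ≤ (p:ℝ)^(-(j:ℤ)) * ‖((((m : ZMod (p ^ Kp)).val : ℤ) - ((m' : ZMod (p ^ Kp)).val : ℤ) : ℤ) : ℚ_[p])‖ :=
              mul_le_mul_of_nonneg_left hnormk (zpow_pos hp0 _).le
      have hsm : ‖(((nm m : ℕ):ℚ_[p]) - τ m) - (((nm m' : ℕ):ℚ_[p]) - τ m')‖ < ‖τ m - τ m'‖ := by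
        have h1 : ‖(((nm m : ℕ):ℚ_[p]) - τ m) - (((nm m' : ℕ):ℚ_[p]) - τ m')‖
            ≤ max ‖((nm m : ℕ):ℚ_[p]) - τ m‖ ‖((nm m' : ℕ):ℚ_[p]) - τ m'‖ := by
          rw [sub_eq_add_neg]
          exact (hnaQ _ _).trans (by rw [norm_neg])
        refine lt_of_le_of_lt h1 ?_
        refine lt_of_lt_of_le (max_lt (hnm m) (hnm m')) ?_
        refine le_trans ?_ hττn
        refine zpow_le_zpow_right₀ hp1.le ?_
        push_cast
        omega
      have hfin : ((nm m : ℕ):ℚ_[p]) - ((nm m' : ℕ):ℚ_[p])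
          = (τ m - τ m') + ((((nm m : ℕ):ℚ_[p]) - τ m) - (((nm m' : ℕ):ℚ_[p]) - τ m')) := by
        ring
      rw [hfin, kp_na_add_eq (K := ℚ_[p]) hnaQ hsm]
      exact hττn
    -- injectivity of Φ
    have hΦinj : Function.Injective Φ := by
      intro m m' hΦeq
      by_contra hne
      have heq : PadicInt.toZModPow Kp (W m) = PadicInt.toZModPow Kp (W m') := by
        have h1 := congrArg (Units.val) hΦeq
        simpa [hΦdef, IsUnit.unit_spec] using h1
      have h2 := hdiff _ _ heq
      have h3 : ((W m : ℚ_[p]) - (W m' : ℚ_[p]))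
          = (a (nm m + 1)/a (nm m) - a (nm m' + 1)/a (nm m')) * (p:ℚ_[p])^(-v) := by
        show (a (nm m + 1)/a (nm m) - t) * (p:ℚ_[p])^(-v)
            - (a (nm m' + 1)/a (nm m') - t) * (p:ℚ_[p])^(-v) = _
        ring
      rw [h3, norm_mul, Padic.norm_p_zpow, neg_neg,
        hrr (nm m) (nm m') (hnmne m) (hnmne m'), hnz m, hnz m'] at h2
      set X := ‖((nm m : ℕ):ℚ_[p]) - ((nm m' : ℕ):ℚ_[p])‖ with hXdef
      have hXeq : (p:ℝ)^(-v₂) * X / ((p:ℝ)^(-(j:ℤ)) * (p:ℝ)^(-(j:ℤ))) * (p:ℝ)^v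
          = X * (p:ℝ)^((j:ℤ)) := by
        rw [hzz]
        rw [div_eq_mul_inv, ← zpow_neg, mul_comm ((p:ℝ)^(-v₂)) X, mul_assoc, mul_assoc,
          hzz, hzz]
        congr 1
        congr 1
        omega
      rw [hXeq] at h2
      have h5 : (p:ℝ)^(-(Kp:ℤ)+1) ≤ X * (p:ℝ)^((j:ℤ)) := by
        calc (p:ℝ)^(-(Kp:ℤ)+1) = (p:ℝ)^(-((j:ℤ)+Kp-1)) * (p:ℝ)^((j:ℤ)) := by
              rw [hzz]; congr 1; ring
          _ ≤ X * (p:ℝ)^((j:ℤ)) :=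
              mul_le_mul_of_nonneg_right (hnn' m m' hne) (zpow_pos hp0 _).le
      have h6 : (p:ℝ)^(-(Kp:ℤ)+1) ≤ (p:ℝ)^(-(Kp:ℤ)) := le_trans h5 h2
      have h7 := (zpow_le_zpow_iff_right₀ hp1).mp h6
      omega
    have hΦsurj : Function.Surjective Φ := Finite.injective_iff_surjective.mp hΦinj
    -- the target unit
    have hwx : ‖(x - t) * (p:ℚ_[p])^(-v)‖ = 1 := by
      rw [norm_mul, hxnorm, Padic.norm_p_zpow, neg_neg, hzz]
      rw [show -v + v = 0 by ring, zpow_zero]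
    set Wx : ℤ_[p] := ⟨(x - t) * (p:ℚ_[p])^(-v), le_of_eq hwx⟩ with hWxdef
    have hWxunit : IsUnit Wx :=
      PadicInt.isUnit_iff.mpr (by rw [PadicInt.norm_def]; exact hwx)
    obtain ⟨m, hm⟩ := hΦsurj (hWxunit.map (PadicInt.toZModPow Kp)).unit
    have heq2 : PadicInt.toZModPow Kp (W m) = PadicInt.toZModPow Kp Wx := by
      have h1 := congrArg (Units.val) hm
      simpa [hΦdef, IsUnit.unit_spec] using h1
    have h2 := hdiff _ _ heq2
    refine ⟨a (nm m + 1) / a (nm m), ⟨nm m, hanm m, rfl⟩, ?_⟩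
    have h3 : ((W m : ℚ_[p]) - (Wx : ℚ_[p]))
        = (a (nm m + 1)/a (nm m) - x) * (p:ℚ_[p])^(-v) := by
      show (a (nm m + 1)/a (nm m) - t) * (p:ℚ_[p])^(-v)
          - (x - t) * (p:ℚ_[p])^(-v) = _
      ring
    rw [h3, norm_mul, Padic.norm_p_zpow, neg_neg] at h2
    rw [dist_eq_norm, norm_sub_rev]
    have hpv : (0:ℝ) < (p:ℝ)^(v:ℤ) := zpow_pos hp0 _
    rw [← le_div_iff₀ hpv] at h2
    calc ‖a (nm m + 1)/a (nm m) - x‖ ≤ (p:ℝ)^(-(Kp:ℤ)) / (p:ℝ)^(v:ℤ) := h2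
      _ = (p:ℝ)^(-v) * (p:ℝ)^(-(Kp:ℤ)) := by
          rw [div_eq_mul_inv, ← zpow_neg, hzz, hzz]
          congr 1
          ring
      _ < ε := hKpbound
  exact Set.Subset.antisymm hsub hsup
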